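/- For all integers n > 9: if n = 3m then R_3(n) = 6m² − 15m + 7; if n = 3m + 1 then R_3(n) = 6m² − 11m + 2; and if n = 3m + 2 then R_3(n) = 6m² − 7m − 1. -/

import Mathlib

/-- `triangleFits s k`: the right-angled isosceles triangle of size `k` fits into the
Ferrers board of the partition with parts `s`, i.e. the `j`-th largest part is
`> k - j` (equivalently `≥ k - j + 1`) for all `j ∈ {1, …, k}`. -/
def triangleFits (s : Multiset ℕ) (k : ℕ) : Prop :=
  ∀ j ∈ Finset.Icc 1 k, j ≤ Multiset.card (s.filter fun x => k + 1 - j ≤ x)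

instance (s : Multiset ℕ) : DecidablePred (triangleFits s) := fun k => by
  unfold triangleFits; infer_instance

/-- The size of the Durfee triangle: the largest `k` such that the triangle of size `k` fits. -/
def durfeeTriangleSize (s : Multiset ℕ) : ℕ :=
  Nat.findGreatest (triangleFits s) (Multiset.card s)

/-- `R k n`: the number of partitions of `n` whose Durfee triangle has size `k`. -/
def R (k n : ℕ) : ℕ :=
  Finset.card (Finset.univ.filter fun p : Nat.Partition n => durfeeTriangleSize p.parts = k)


namespace R3proof
open Multiset

/-- number of parts `≥ t` -/
def Nge (s : Multiset ℕ) (t : ℕ) : ℕ := Multiset.card (s.filter fun x => t ≤ x)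

lemma Nge_mono {s : Multiset ℕ} {a b : ℕ} (h : a ≤ b) : Nge s b ≤ Nge s a := by
  apply Multiset.card_le_card
  apply Multiset.monotone_filter_right
  intro x hx; omega

lemma Nge_le_card (s : Multiset ℕ) (t : ℕ) : Nge s t ≤ Multiset.card s :=
  Multiset.card_le_card (Multiset.filter_le _ s)

lemma fits3_iff (s : Multiset ℕ) : triangleFits s 3 ↔ 1 ≤ Nge s 3 ∧ 2 ≤ Nge s 2 ∧ 3 ≤ Nge s 1 := by
  constructor
  · intro h
    refine ⟨h 1 (by decide), h 2 (by decide), h 3 (by decide)⟩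
  · rintro ⟨h1, h2, h3⟩ j hj
    simp only [Finset.mem_Icc] at hj
    obtain ⟨hj1, hj2⟩ := hj
    interval_cases j
    · exact h1
    · exact h2
    · exact h3

lemma fits4_iff (s : Multiset ℕ) : triangleFits s 4 ↔ 1 ≤ Nge s 4 ∧ 2 ≤ Nge s 3 ∧ 3 ≤ Nge s 2 ∧ 4 ≤ Nge s 1 := by
  constructor
  · intro h
    refine ⟨h 1 (by decide), h 2 (by decide), h 3 (by decide), h 4 (by decide)⟩
  · rintro ⟨h1, h2, h3, h4⟩ j hj
    simp only [Finset.mem_Icc] at hj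
    obtain ⟨hj1, hj2⟩ := hj
    interval_cases j
    · exact h1
    · exact h2
    · exact h3
    · exact h4

lemma fits_anti {s : Multiset ℕ} {k : ℕ} (hk : 4 ≤ k) (h : triangleFits s k) : triangleFits s 4 := by
  intro j hj
  simp only [Finset.mem_Icc] at hj
  have h2 := h (j + (k - 4)) (by simp only [Finset.mem_Icc]; omega)
  have e : k + 1 - (j + (k-4)) = 4 + 1 - j := by omega
  rw [e] at h2
  omega

lemma durfee_eq_three_iff (s : Multiset ℕ) :
    durfeeTriangleSize s = 3 ↔ triangleFits s 3 ∧ ¬ triangleFits s 4 := by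
  unfold durfeeTriangleSize
  rw [Nat.findGreatest_eq_iff]
  constructor
  · rintro ⟨hle, hP, hgt⟩
    refine ⟨hP (by omega), fun h4 => ?_⟩
    have : 4 ≤ Nge s 1 := (fits4_iff s).mp h4 |>.2.2.2
    exact hgt (by omega) (le_trans this (Nge_le_card s 1)) h4
  · rintro ⟨h3, h4⟩
    have hc : 3 ≤ Multiset.card s :=
      le_trans ((fits3_iff s).mp h3).2.2 (Nge_le_card s 1)
    refine ⟨hc, fun _ => h3, fun k hk hk2 hPk => ?_⟩
    exact h4 (fits_anti (by omega) hPk)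

end R3proof

namespace R3proof
open Multiset

lemma filter_replicate' (p : ℕ → Prop) [DecidablePred p] (k a : ℕ) :
    (replicate k a).filter p = if p a then replicate k a else 0 := by
  induction k with
  | zero => simp
  | succ k ih =>
    rw [replicate_succ, Multiset.filter_cons, ih]
    split_ifs <;> simp [replicate_succ]

lemma Nge_add (s t : Multiset ℕ) (a : ℕ) : Nge (s+t) a = Nge s a + Nge t a := by
  simp [Nge, Multiset.filter_add]

lemma Nge_replicate (k a t : ℕ) : Nge (replicate k a) t = if t ≤ a then k else 0 := by
  rw [Nge, filter_replicate']
  split_ifs <;> simp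

lemma Nge_cons (x t : ℕ) (s : Multiset ℕ) :
    Nge (x ::ₘ s) t = (if t ≤ x then 1 else 0) + Nge s t := by
  rw [Nge, Multiset.filter_cons]
  split_ifs <;> simp [Nge] <;> omega

lemma Nge_zero (t : ℕ) : Nge 0 t = 0 := by simp [Nge]

lemma decomp12 (s : Multiset ℕ) (hpos : ∀ x ∈ s, 0 < x) (hle : ∀ x ∈ s, x ≤ 2) :
    s = replicate (s.count 2) 2 + replicate (s.count 1) 1 := by
  rw [Multiset.ext]
  intro b
  rcases b with _|_|_|k
  · rw [Multiset.count_eq_zero_of_notMem (fun h => by have := hpos 0 h; omega)]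
    simp [Multiset.count_replicate]
  · simp [Multiset.count_replicate]
  · simp [Multiset.count_replicate]
  · rw [Multiset.count_eq_zero_of_notMem (fun h => by have := hle _ h; omega)]
    simp [Multiset.count_replicate]

lemma decomp123 (s : Multiset ℕ) (hpos : ∀ x ∈ s, 0 < x) (hle : ∀ x ∈ s, x ≤ 3) :
    s = replicate (s.count 3) 3 + replicate (s.count 2) 2 + replicate (s.count 1) 1 := by
  rw [Multiset.ext]
  intro b
  rcases b with _|_|_|_|k
  · rw [Multiset.count_eq_zero_of_notMem (fun h => by have := hpos 0 h; omega)]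
    simp [Multiset.count_replicate]
  · simp [Multiset.count_replicate]
  · simp [Multiset.count_replicate]
  · simp [Multiset.count_replicate]
  · rw [Multiset.count_eq_zero_of_notMem (fun h => by have := hle _ h; omega)]
    simp [Multiset.count_replicate]

lemma triple_inj {x y z x' y' z' : ℕ} (h1 : z ≤ y) (h2 : y ≤ x) (h1' : z' ≤ y') (h2' : y' ≤ x')
    (he : ({x,y,z} : Multiset ℕ) = {x',y',z'}) : x = x' ∧ y = y' ∧ z = z' := by
  have hp : ([x,y,z] : List ℕ).Perm [x',y',z'] := by
    rw [← Multiset.coe_eq_coe]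
    exact he
  have hs : ([x,y,z] : List ℕ).Pairwise (· ≥ ·) := by
    simp [List.pairwise_cons]; omega
  have hs' : ([x',y',z'] : List ℕ).Pairwise (· ≥ ·) := by
    simp [List.pairwise_cons]; omega
  have := hp.eq_of_pairwise' hs hs'
  simp only [List.cons.injEq] at this
  exact ⟨this.1, this.2.1, this.2.2.1⟩

lemma pair_inj {u v u' v' : ℕ} (h1 : v ≤ u) (h1' : v' ≤ u')
    (he : (u ::ₘ {v} : Multiset ℕ) = u' ::ₘ {v'}) : u = u' ∧ v = v' := by
  have hp : ([u,v] : List ℕ).Perm [u',v'] := by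
    rw [← Multiset.coe_eq_coe]
    exact he
  have hs : ([u,v] : List ℕ).Pairwise (· ≥ ·) := by simp [List.pairwise_cons]; omega
  have hs' : ([u',v'] : List ℕ).Pairwise (· ≥ ·) := by simp [List.pairwise_cons]; omega
  have := hp.eq_of_pairwise' hs hs'
  simp only [List.cons.injEq] at this
  exact ⟨this.1, this.2.1⟩

lemma sorted3 (a b c : ℕ) : ∃ x y z, ({a,b,c} : Multiset ℕ) = {x,y,z} ∧ z ≤ y ∧ y ≤ x := by
  have hperm := List.perm_insertionSort (· ≥ ·) [a,b,c]
  have hsort := List.pairwise_insertionSort (· ≥ ·) [a,b,c]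
  have hlen : (List.insertionSort (· ≥ ·) [a,b,c]).length = 3 := by
    rw [hperm.length_eq]; rfl
  set l := List.insertionSort (· ≥ ·) [a,b,c] with hl
  match l, hlen, hperm, hsort with
  | [x,y,z], _, hperm, hsort =>
    refine ⟨x, y, z, ?_, ?_, ?_⟩
    · exact Quotient.sound hperm.symm
    · simp [List.pairwise_cons] at hsort
      omega
    · simp [List.pairwise_cons] at hsort
      omega
end R3proof

section counting
open Finset

def TCs (n : ℕ) : Finset (ℕ×ℕ) := (range (n+1) ×ˢ range (n+1)).filter fun q =>
  1 ≤ q.2 ∧ q.2 ≤ q.1 ∧ 2 ≤ q.1 ∧ 2*q.1+q.2 ≤ n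

lemma mem_TCs {n : ℕ} {q : ℕ×ℕ} : q ∈ TCs n ↔ 1 ≤ q.2 ∧ q.2 ≤ q.1 ∧ 2 ≤ q.1 ∧ 2*q.1+q.2 ≤ n := by
  simp only [TCs, mem_filter, mem_product, mem_range]; omega

lemma seg_card (a b c : ℕ) : (((Icc a b).image fun i => (i,c)).card) = b+1-a := by
  rw [Finset.card_image_of_injective _ (fun x y h => by simpa using h), Nat.card_Icc]

lemma shift_card {T S : Finset (ℕ×ℕ)} (d e : ℕ)
    (h : ∀ a b : ℕ, (a,b) ∈ T → (a+d, b+e) ∈ S) :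
    T.card = (S.filter fun q => d ≤ q.1 ∧ e ≤ q.2 ∧ (q.1-d, q.2-e) ∈ T).card := by
  apply Finset.card_bij (fun q _ => (q.1+d, q.2+e))
  · intro a ha
    simp only [mem_filter]
    refine ⟨h a.1 a.2 ha, by omega, by omega, ?_⟩
    simpa using ha
  · intro a _ b _ hab
    simp only [Prod.mk.injEq] at hab
    exact Prod.ext (by omega) (by omega)
  · intro b hb
    simp only [mem_filter] at hb
    exact ⟨(b.1-d, b.2-e), hb.2.2.2, Prod.ext (by omega) (by omega)⟩

lemma TCs_step {n : ℕ} (hn : 10 ≤ n) : (TCs (n+6)).card = (TCs n).card + (n+3) := by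
  have h1 : (TCs n).card = ((TCs (n+6)).filter fun q => 2 ≤ q.1 ∧ 2 ≤ q.2 ∧ (q.1-2, q.2-2) ∈ TCs n).card := by
    apply shift_card 2 2
    intro a b; rw [mem_TCs, mem_TCs]; dsimp only; omega
  have h2 := Finset.card_filter_add_card_filter_not
    (s := TCs (n+6)) (p := fun q => 2 ≤ q.1 ∧ 2 ≤ q.2 ∧ (q.1-2, q.2-2) ∈ TCs n)
  have h3 : ((TCs (n+6)).filter fun q => ¬(2 ≤ q.1 ∧ 2 ≤ q.2 ∧ (q.1-2, q.2-2) ∈ TCs n)) =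
      (((Icc 2 ((n+5)/2)).image fun i => (i,1)) ∪ ((Icc 2 ((n+4)/2)).image fun i => (i,2))) ∪ {(3,3)} := by
    ext ⟨a,b⟩
    simp only [mem_filter, mem_TCs, mem_union, mem_image, mem_Icc, mem_singleton, Prod.mk.injEq]
    constructor
    · rintro ⟨⟨h1,h2,h3,h4⟩, h5⟩
      by_cases hb1 : b = 1
      · exact Or.inl (Or.inl ⟨a, by omega, by omega, by omega⟩)
      by_cases hb2 : b = 2
      · exact Or.inl (Or.inr ⟨a, by omega, by omega, by omega⟩)
      · right; omega
    · rintro ((⟨i,hi,he1,he2⟩ | ⟨i,hi,he1,he2⟩) | ⟨he1,he2⟩) <;>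
        exact ⟨⟨by omega, by omega, by omega, by omega⟩, by omega⟩
  have hd : Disjoint (((Icc 2 ((n+5)/2)).image fun i => (i,1)) ∪ ((Icc 2 ((n+4)/2)).image fun i => (i,2))) ({(3,3)} : Finset (ℕ×ℕ)) := by
    simp only [disjoint_singleton_right, mem_union, mem_image, mem_Icc, Prod.mk.injEq]
    rintro (⟨i,_,_,h⟩|⟨i,_,_,h⟩) <;> omega
  have hd2 : Disjoint ((Icc 2 ((n+5)/2)).image fun i => (i,1)) ((Icc 2 ((n+4)/2)).image fun i => (i,2)) := by
    refine Finset.disjoint_left.mpr ?_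
    rintro ⟨a,b⟩ h1 h2
    simp only [mem_image, mem_Icc, Prod.mk.injEq] at h1 h2
    obtain ⟨i,_,_,e1⟩ := h1
    obtain ⟨i',_,_,e2⟩ := h2
    omega
  rw [h3, card_union_of_disjoint hd, card_union_of_disjoint hd2, seg_card, seg_card, card_singleton] at h2
  omega

lemma seg_disj {l u l' u' c c' : ℕ} (h : c ≠ c') :
    Disjoint ((Icc l u).image fun i => (i,c)) ((Icc l' u').image fun i => (i,c')) := by
  refine Finset.disjoint_left.mpr ?_
  rintro ⟨a,b⟩ h1 h2
  simp only [mem_image, mem_Icc, Prod.mk.injEq] at h1 h2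
  obtain ⟨i,_,_,e1⟩ := h1
  obtain ⟨i',_,_,e2⟩ := h2
  exact h (e1.trans e2.symm)

def TFs (n : ℕ) : Finset (ℕ×ℕ) := (range (n+1) ×ˢ range (n+1)).filter fun q =>
  2 ≤ q.2 ∧ q.2 ≤ q.1 ∧ 3 ≤ q.1 ∧ q.1+q.2+2 ≤ n
def TEs (n : ℕ) : Finset (ℕ×ℕ) := (range (n+1) ×ˢ range (n+1)).filter fun q =>
  3 ≤ q.2 ∧ q.2 ≤ q.1 ∧ 4 ≤ q.1 ∧ q.1+q.2+1 ≤ n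
def TDs (n : ℕ) : Finset (ℕ×ℕ) := (range (n+1) ×ˢ range (n+1)).filter fun q =>
  2 ≤ q.2 ∧ q.2 ≤ q.1 ∧ 3 ≤ q.1 ∧ 2*q.1+q.2 ≤ n ∧ q.1+q.2+4 ≤ n

lemma mem_TFs {n : ℕ} {q : ℕ×ℕ} : q ∈ TFs n ↔ 2 ≤ q.2 ∧ q.2 ≤ q.1 ∧ 3 ≤ q.1 ∧ q.1+q.2+2 ≤ n := by
  simp only [TFs, mem_filter, mem_product, mem_range]; omega
lemma mem_TEs {n : ℕ} {q : ℕ×ℕ} : q ∈ TEs n ↔ 3 ≤ q.2 ∧ q.2 ≤ q.1 ∧ 4 ≤ q.1 ∧ q.1+q.2+1 ≤ n := by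
  simp only [TEs, mem_filter, mem_product, mem_range]; omega
lemma mem_TDs {n : ℕ} {q : ℕ×ℕ} : q ∈ TDs n ↔ 2 ≤ q.2 ∧ q.2 ≤ q.1 ∧ 3 ≤ q.1 ∧ 2*q.1+q.2 ≤ n ∧ q.1+q.2+4 ≤ n := by
  simp only [TDs, mem_filter, mem_product, mem_range]; omega

lemma TFs_step {n : ℕ} (hn : 10 ≤ n) : (TFs (n+6)).card = (TFs n).card + (3*n-3) := by
  have h1 : (TFs n).card = ((TFs (n+6)).filter fun q => 3 ≤ q.1 ∧ 3 ≤ q.2 ∧ (q.1-3, q.2-3) ∈ TFs n).card := by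
    apply shift_card 3 3
    intro a b; rw [mem_TFs, mem_TFs]; dsimp only; omega
  have h2 := Finset.card_filter_add_card_filter_not
    (s := TFs (n+6)) (p := fun q => 3 ≤ q.1 ∧ 3 ≤ q.2 ∧ (q.1-3, q.2-3) ∈ TFs n)
  have h3 : ((TFs (n+6)).filter fun q => ¬(3 ≤ q.1 ∧ 3 ≤ q.2 ∧ (q.1-3, q.2-3) ∈ TFs n)) =
      ((Icc 3 (n+2)).image fun i => (i,2)) ∪ (((Icc 3 (n+1)).image fun i => (i,3)) ∪
      (((Icc 4 n).image fun i => (i,4)) ∪ ((Icc 5 5).image fun i => (i,5)))) := by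
    ext ⟨a,b⟩
    simp only [mem_filter, mem_TFs, mem_union, mem_image, mem_Icc, Prod.mk.injEq]
    constructor
    · rintro ⟨⟨h1,h2,h3,h4⟩, h5⟩
      by_cases hb : b = 2
      · exact Or.inl ⟨a, by omega, by omega, by omega⟩
      by_cases hb3 : b = 3
      · exact Or.inr (Or.inl ⟨a, by omega, by omega, by omega⟩)
      by_cases hb4 : b = 4
      · exact Or.inr (Or.inr (Or.inl ⟨a, by omega, by omega, by omega⟩))
      · exact Or.inr (Or.inr (Or.inr ⟨a, by omega, by omega, by omega⟩))
    · rintro (⟨i,hi,he1,he2⟩ | (⟨i,hi,he1,he2⟩ | (⟨i,hi,he1,he2⟩ | ⟨i,hi,he1,he2⟩))) <;>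
        exact ⟨⟨by omega, by omega, by omega, by omega⟩, by omega⟩
  rw [h3, card_union_of_disjoint, card_union_of_disjoint, card_union_of_disjoint,
    seg_card, seg_card, seg_card, seg_card] at h2
  · omega
  · exact seg_disj (by omega)
  · exact disjoint_union_right.mpr ⟨seg_disj (by omega), seg_disj (by omega)⟩
  · exact disjoint_union_right.mpr ⟨seg_disj (by omega),
      disjoint_union_right.mpr ⟨seg_disj (by omega), seg_disj (by omega)⟩⟩

lemma TEs_step {n : ℕ} (hn : 10 ≤ n) : (TEs (n+6)).card = (TEs n).card + (3*n-6) := by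
  have h1 : (TEs n).card = ((TEs (n+6)).filter fun q => 3 ≤ q.1 ∧ 3 ≤ q.2 ∧ (q.1-3, q.2-3) ∈ TEs n).card := by
    apply shift_card 3 3
    intro a b; rw [mem_TEs, mem_TEs]; dsimp only; omega
  have h2 := Finset.card_filter_add_card_filter_not
    (s := TEs (n+6)) (p := fun q => 3 ≤ q.1 ∧ 3 ≤ q.2 ∧ (q.1-3, q.2-3) ∈ TEs n)
  have h3 : ((TEs (n+6)).filter fun q => ¬(3 ≤ q.1 ∧ 3 ≤ q.2 ∧ (q.1-3, q.2-3) ∈ TEs n)) =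
      ((Icc 4 (n+2)).image fun i => (i,3)) ∪ (((Icc 4 (n+1)).image fun i => (i,4)) ∪
      (((Icc 5 n).image fun i => (i,5)) ∪ ((Icc 6 6).image fun i => (i,6)))) := by
    ext ⟨a,b⟩
    simp only [mem_filter, mem_TEs, mem_union, mem_image, mem_Icc, Prod.mk.injEq]
    constructor
    · rintro ⟨⟨h1,h2,h3,h4⟩, h5⟩
      by_cases hb : b = 3
      · exact Or.inl ⟨a, by omega, by omega, by omega⟩
      by_cases hb4 : b = 4
      · exact Or.inr (Or.inl ⟨a, by omega, by omega, by omega⟩)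
      by_cases hb5 : b = 5
      · exact Or.inr (Or.inr (Or.inl ⟨a, by omega, by omega, by omega⟩))
      · exact Or.inr (Or.inr (Or.inr ⟨a, by omega, by omega, by omega⟩))
    · rintro (⟨i,hi,he1,he2⟩ | (⟨i,hi,he1,he2⟩ | (⟨i,hi,he1,he2⟩ | ⟨i,hi,he1,he2⟩))) <;>
        exact ⟨⟨by omega, by omega, by omega, by omega⟩, by omega⟩
  rw [h3, card_union_of_disjoint, card_union_of_disjoint, card_union_of_disjoint,
    seg_card, seg_card, seg_card, seg_card] at h2
  · omega
  · exact seg_disj (by omega)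
  · exact disjoint_union_right.mpr ⟨seg_disj (by omega), seg_disj (by omega)⟩
  · exact disjoint_union_right.mpr ⟨seg_disj (by omega),
      disjoint_union_right.mpr ⟨seg_disj (by omega), seg_disj (by omega)⟩⟩

lemma TDs_step {n : ℕ} (hn : 10 ≤ n) : (TDs (n+6)).card = (TDs n).card + n := by
  have h1 : (TDs n).card = ((TDs (n+6)).filter fun q => 2 ≤ q.1 ∧ 2 ≤ q.2 ∧ (q.1-2, q.2-2) ∈ TDs n).card := by
    apply shift_card 2 2
    intro a b; rw [mem_TDs, mem_TDs]; dsimp only; omega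
  have h2 := Finset.card_filter_add_card_filter_not
    (s := TDs (n+6)) (p := fun q => 2 ≤ q.1 ∧ 2 ≤ q.2 ∧ (q.1-2, q.2-2) ∈ TDs n)
  have h3 : ((TDs (n+6)).filter fun q => ¬(2 ≤ q.1 ∧ 2 ≤ q.2 ∧ (q.1-2, q.2-2) ∈ TDs n)) =
      ((Icc 3 ((n+4)/2)).image fun i => (i,2)) ∪ (((Icc 3 ((n+3)/2)).image fun i => (i,3)) ∪
      ((Icc 4 4).image fun i => (i,4))) := by
    ext ⟨a,b⟩
    simp only [mem_filter, mem_TDs, mem_union, mem_image, mem_Icc, Prod.mk.injEq]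
    constructor
    · rintro ⟨⟨h1,h2,h3,h4,h5⟩, h6⟩
      by_cases hb : b = 2
      · exact Or.inl ⟨a, by omega, by omega, by omega⟩
      by_cases hb3 : b = 3
      · exact Or.inr (Or.inl ⟨a, by omega, by omega, by omega⟩)
      · exact Or.inr (Or.inr ⟨a, by omega, by omega, by omega⟩)
    · rintro (⟨i,hi,he1,he2⟩ | (⟨i,hi,he1,he2⟩ | ⟨i,hi,he1,he2⟩)) <;>
        exact ⟨⟨by omega, by omega, by omega, by omega, by omega⟩, by omega⟩
  rw [h3, card_union_of_disjoint, card_union_of_disjoint,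
    seg_card, seg_card, seg_card] at h2
  · omega
  · exact seg_disj (by omega)
  · exact disjoint_union_right.mpr ⟨seg_disj (by omega), seg_disj (by omega)⟩

def Scard (n : ℕ) : ℕ := (TCs n).card + (TFs n).card + (TEs n).card + (TDs n).card

lemma Scard_step {n : ℕ} (hn : 10 ≤ n) : Scard (n+6) = Scard n + (8*n-6) := by
  unfold Scard
  rw [TCs_step hn, TFs_step hn, TEs_step hn, TDs_step hn]
  omega

lemma Scard_formula : ∀ n : ℕ, 10 ≤ n → 3 * Scard n + 15*n = 2*n^2 + (if n % 3 = 0 then 21 else 19) := by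
  intro n
  induction n using Nat.strong_induction_on with
  | _ n ih =>
    intro hn
    by_cases h : n ≤ 15
    · interval_cases n <;> decide
    · obtain ⟨k, rfl⟩ : ∃ k, n = k+6 := ⟨n-6, by omega⟩
      have hk : 10 ≤ k := by omega
      have h1 := ih k (by omega) hk
      have h2 := Scard_step hk
      have h3 : (k+6) % 3 = k % 3 := by omega
      rw [h2, h3]
      have e : 2*(k+6)^2 = 2*k^2 + (24*k + 72) := by ring
      rw [e]
      omega

end counting


namespace R3proof
open Multiset

variable {n : ℕ}

def mkC (n i j : ℕ) : Multiset ℕ :=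
  replicate j 3 + replicate (i-j) 2 + replicate (n-(2*i+j)) 1

lemma NgeC {i j : ℕ} (hj : j ≤ i) (hle : 2*i+j ≤ n) :
    Nge (mkC n i j) 4 = 0 ∧ Nge (mkC n i j) 3 = j ∧ Nge (mkC n i j) 2 = i ∧
      Nge (mkC n i j) 1 = n-i-j := by
  refine ⟨?_, ?_, ?_, ?_⟩ <;> (norm_num [mkC, Nge_add, Nge_replicate]; try omega)

lemma sumC {i j : ℕ} (hj : j ≤ i) (hle : 2*i+j ≤ n) : (mkC n i j).sum = n := by
  simp [mkC, Multiset.sum_replicate]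
  omega

lemma posC {i j : ℕ} : ∀ x ∈ mkC n i j, 0 < x := by
  intro x hx
  simp [mkC, Multiset.mem_replicate] at hx
  omega

def PC (p : Nat.Partition n) : Prop :=
  1 ≤ Nge p.parts 3 ∧ 2 ≤ Nge p.parts 2 ∧ 3 ≤ Nge p.parts 1 ∧ Nge p.parts 4 = 0

instance : DecidablePred (PC (n := n)) := fun p => by unfold PC; infer_instance

lemma cardC (hn : 10 ≤ n) :
    (TCs n).card = (Finset.univ.filter fun p : Nat.Partition n => PC p).card := by
  apply Finset.card_bij (i := fun q hq =>
    ({ parts := mkC n q.1 q.2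
       parts_pos := fun hx => posC _ hx
       parts_sum := sumC (mem_TCs.mp hq).2.1 (mem_TCs.mp hq).2.2.2 } : Nat.Partition n))
  · intro q hq
    obtain ⟨h1, h2, h3, h4⟩ := mem_TCs.mp hq
    obtain ⟨e4, e3, e2, e1⟩ := NgeC (n := n) h2 h4
    simp only [Finset.mem_filter, Finset.mem_univ, true_and]; simp only [PC]
    refine ⟨by omega, by omega, by omega, by omega⟩
  · intro q1 hq1 q2 hq2 he
    have hp := congrArg Nat.Partition.parts he
    simp only at hp
    obtain ⟨h1, h2, h3, h4⟩ := mem_TCs.mp hq1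
    obtain ⟨h1', h2', h3', h4'⟩ := mem_TCs.mp hq2
    obtain ⟨e4, e3, e2, e1⟩ := NgeC (n := n) h2 h4
    obtain ⟨e4', e3', e2', e1'⟩ := NgeC (n := n) h2' h4'
    have g3 : Nge (mkC n q1.1 q1.2) 3 = Nge (mkC n q2.1 q2.2) 3 := by rw [hp]
    have g2 : Nge (mkC n q1.1 q1.2) 2 = Nge (mkC n q2.1 q2.2) 2 := by rw [hp]
    exact Prod.ext (by omega) (by omega)
  · intro p hp
    simp only [Finset.mem_filter, Finset.mem_univ, true_and] at hp; simp only [PC] at hp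
    obtain ⟨h3, h2, h1, h4⟩ := hp
    have hle : ∀ x ∈ p.parts, x ≤ 3 := by
      intro x hx
      have := Multiset.filter_eq_nil.mp (Multiset.card_eq_zero.mp h4) x hx
      omega
    have hd := decomp123 p.parts (fun x hx => p.parts_pos hx) hle
    set a := p.parts.count 3 with ha
    set b := p.parts.count 2 with hb
    set c := p.parts.count 1 with hc
    have hsum : 3*a + 2*b + c = n := by
      have := p.parts_sum
      rw [hd] at this
      simp [Multiset.sum_replicate] at this
      omega
    have e3 : Nge p.parts 3 = a := by
      rw [hd]; norm_num [Nge_add, Nge_replicate]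
    have e2 : Nge p.parts 2 = a + b := by
      rw [hd]; norm_num [Nge_add, Nge_replicate]
    have e1 : Nge p.parts 1 = a + b + c := by
      rw [hd]; norm_num [Nge_add, Nge_replicate]
    refine ⟨(a+b, a), mem_TCs.mpr ⟨by omega, by omega, by omega, by omega⟩, ?_⟩
    apply Nat.Partition.ext
    simp only
    rw [hd, mkC]
    have eb : a + b - a = b := by omega
    have ec : n - (2*(a+b)+a) = c := by omega
    rw [eb, ec]
end R3proof

namespace R3proof
open Multiset

variable {n : ℕ}

lemma Nge_singleton (z t : ℕ) : Nge {z} t = if t ≤ z then 1 else 0 := by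
  rw [← Multiset.cons_zero, Nge_cons, Nge_zero]
  omega

lemma Nge_one_eq (p : Nat.Partition n) : Nge p.parts 1 = Multiset.card p.parts := by
  unfold Nge
  congr 1
  rw [Multiset.filter_eq_self]
  intro a ha
  exact p.parts_pos ha

lemma sorted2 (a b : ℕ) : ∃ u v, (a ::ₘ {b} : Multiset ℕ) = u ::ₘ {v} ∧ v ≤ u := by
  rcases le_total b a with h | h
  · exact ⟨a, b, rfl, h⟩
  · exact ⟨b, a, Multiset.cons_swap a b 0, h⟩

/-! ### Family F -/

def mkF (n i j : ℕ) : Multiset ℕ := (n+2-i-j) ::ₘ (replicate (j-1) 2 + replicate (i-j) 1)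

lemma NgeF {i j : ℕ} (h2 : 2 ≤ j) (hj : j ≤ i) (hle : i+j+2 ≤ n) :
    Nge (mkF n i j) 4 = 1 ∧ Nge (mkF n i j) 3 = 1 ∧ Nge (mkF n i j) 2 = j ∧
      Nge (mkF n i j) 1 = i := by
  refine ⟨?_, ?_, ?_, ?_⟩ <;>
    (rw [mkF, Nge_cons, Nge_add, Nge_replicate, Nge_replicate]; split_ifs <;> omega)

lemma sumF {i j : ℕ} (h2 : 2 ≤ j) (hj : j ≤ i) (hle : i+j+2 ≤ n) : (mkF n i j).sum = n := by
  simp [mkF, Multiset.sum_replicate]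
  omega

lemma posF {i j : ℕ} (hle : i+j+2 ≤ n) : ∀ x ∈ mkF n i j, 0 < x := by
  intro x hx
  simp [mkF, Multiset.mem_replicate] at hx
  omega

def PF (p : Nat.Partition n) : Prop :=
  1 ≤ Nge p.parts 4 ∧ Nge p.parts 3 = 1 ∧ 2 ≤ Nge p.parts 2 ∧ 3 ≤ Nge p.parts 1

instance : DecidablePred (PF (n := n)) := fun p => by unfold PF; infer_instance

lemma cardF (hn : 10 ≤ n) :
    (TFs n).card = (Finset.univ.filter fun p : Nat.Partition n => PF p).card := by
  apply Finset.card_bij (i := fun q hq =>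
    ({ parts := mkF n q.1 q.2
       parts_pos := fun hx => posF (mem_TFs.mp hq).2.2.2 _ hx
       parts_sum := sumF (mem_TFs.mp hq).1 (mem_TFs.mp hq).2.1 (mem_TFs.mp hq).2.2.2 } : Nat.Partition n))
  · intro q hq
    obtain ⟨h1, h2, h3, h4⟩ := mem_TFs.mp hq
    obtain ⟨e4, e3, e2, e1⟩ := NgeF (n := n) h1 h2 h4
    simp only [Finset.mem_filter, Finset.mem_univ, true_and]; simp only [PF]
    refine ⟨by omega, by omega, by omega, by omega⟩
  · intro q1 hq1 q2 hq2 he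
    have hp := congrArg Nat.Partition.parts he
    simp only at hp
    obtain ⟨h1, h2, h3, h4⟩ := mem_TFs.mp hq1
    obtain ⟨h1', h2', h3', h4'⟩ := mem_TFs.mp hq2
    obtain ⟨e4, e3, e2, e1⟩ := NgeF (n := n) h1 h2 h4
    obtain ⟨e4', e3', e2', e1'⟩ := NgeF (n := n) h1' h2' h4'
    have g2 : Nge (mkF n q1.1 q1.2) 2 = Nge (mkF n q2.1 q2.2) 2 := by rw [hp]
    have g1 : Nge (mkF n q1.1 q1.2) 1 = Nge (mkF n q2.1 q2.2) 1 := by rw [hp]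
    exact Prod.ext (by omega) (by omega)
  · intro p hp
    simp only [Finset.mem_filter, Finset.mem_univ, true_and] at hp; simp only [PF] at hp
    obtain ⟨h4, h3, h2, h1⟩ := hp
    obtain ⟨x, hx⟩ := Multiset.card_eq_one.mp h3
    have hx3 : 3 ≤ x := by
      have : x ∈ Multiset.filter (fun t => 3 ≤ t) p.parts := by
        rw [hx]; exact Multiset.mem_singleton_self x
      exact Multiset.of_mem_filter this
    have hx4 : 4 ≤ x := by
      have hsub : Multiset.filter (fun t => 4 ≤ t) p.parts ≤
          Multiset.filter (fun t => 3 ≤ t) p.parts := by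
        apply Multiset.monotone_filter_right
        intro t ht; omega
      rw [hx] at hsub
      have heq := Multiset.eq_of_le_of_card_le hsub (by simpa [Nge] using h4)
      have : x ∈ Multiset.filter (fun t => 4 ≤ t) p.parts := by
        rw [heq]; exact Multiset.mem_singleton_self x
      exact Multiset.of_mem_filter this
    set r := Multiset.filter (fun t => ¬ 3 ≤ t) p.parts with hr
    have hsplit : p.parts = x ::ₘ r := by
      rw [← Multiset.singleton_add, ← hx]
      exact (Multiset.filter_add_not _ _).symm
    have hrle : ∀ t ∈ r, t ≤ 2 := by
      intro t ht
      have := Multiset.of_mem_filter ht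
      omega
    have hrpos : ∀ t ∈ r, 0 < t := fun t ht => p.parts_pos (Multiset.mem_of_le (Multiset.filter_le _ _) ht)
    have hrd := decomp12 r hrpos hrle
    set b := r.count 2 with hb
    set c := r.count 1 with hc
    have hparts : p.parts = x ::ₘ (replicate b 2 + replicate c 1) := by
      rw [hsplit, hrd]
    have hsum : x + 2*b + c = n := by
      have := p.parts_sum
      rw [hparts] at this
      simp [Multiset.sum_replicate] at this
      omega
    have e2 : Nge p.parts 2 = 1 + b := by
      rw [hparts, Nge_cons, Nge_add, Nge_replicate, Nge_replicate]
      split_ifs <;> omega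
    have e1 : Nge p.parts 1 = 1 + b + c := by
      rw [hparts, Nge_cons, Nge_add, Nge_replicate, Nge_replicate]
      split_ifs <;> omega
    refine ⟨(1+b+c, 1+b), mem_TFs.mpr ⟨by omega, by omega, by omega, by omega⟩, ?_⟩
    apply Nat.Partition.ext
    simp only
    rw [hparts, mkF]
    have ex : n+2-(1+b+c)-(1+b) = x := by omega
    have eb : (1+b) - 1 = b := by omega
    have ec : (1+b+c) - (1+b) = c := by omega
    rw [ex, eb, ec]

end R3proof

namespace R3proof
open Multiset

variable {n : ℕ}

/-! ### Family E -/

def mkE (n x y : ℕ) : Multiset ℕ := x ::ₘ y ::ₘ replicate (n-x-y) 1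

lemma NgeE {x y : ℕ} (hy : 3 ≤ y) (hyx : y ≤ x) (h4 : 4 ≤ x) (hle : x+y+1 ≤ n) :
    1 ≤ Nge (mkE n x y) 4 ∧ Nge (mkE n x y) 3 = 2 ∧ Nge (mkE n x y) 2 = 2 ∧
      Nge (mkE n x y) 1 = 2 + (n-x-y) := by
  refine ⟨?_, ?_, ?_, ?_⟩ <;>
    (rw [mkE, Nge_cons, Nge_cons, Nge_replicate]; split_ifs <;> omega)

lemma sumE {x y : ℕ} (hle : x+y+1 ≤ n) : (mkE n x y).sum = n := by
  simp [mkE, Multiset.sum_replicate]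
  omega

lemma posE {x y : ℕ} (hy : 3 ≤ y) (h4 : 4 ≤ x) : ∀ t ∈ mkE n x y, 0 < t := by
  intro t ht
  simp [mkE, Multiset.mem_replicate] at ht
  omega

lemma filtE {x y : ℕ} (hy : 3 ≤ y) (h4 : 4 ≤ x) :
    (mkE n x y).filter (fun t => 2 ≤ t) = x ::ₘ {y} := by
  rw [mkE, Multiset.filter_cons, Multiset.filter_cons, filter_replicate']
  rw [if_pos (by omega), if_pos (by omega), if_neg (by omega)]
  simp

def PE (p : Nat.Partition n) : Prop :=
  1 ≤ Nge p.parts 4 ∧ 2 ≤ Nge p.parts 3 ∧ Nge p.parts 2 = 2 ∧ 3 ≤ Nge p.parts 1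

instance : DecidablePred (PE (n := n)) := fun p => by unfold PE; infer_instance

lemma cardE (hn : 10 ≤ n) :
    (TEs n).card = (Finset.univ.filter fun p : Nat.Partition n => PE p).card := by
  apply Finset.card_bij (i := fun q hq =>
    ({ parts := mkE n q.1 q.2
       parts_pos := fun hx => posE (mem_TEs.mp hq).1 (mem_TEs.mp hq).2.2.1 _ hx
       parts_sum := sumE (mem_TEs.mp hq).2.2.2 } : Nat.Partition n))
  · intro q hq
    obtain ⟨h1, h2, h3, h4⟩ := mem_TEs.mp hq
    obtain ⟨e4, e3, e2, e1⟩ := NgeE (n := n) h1 h2 h3 h4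
    simp only [Finset.mem_filter, Finset.mem_univ, true_and]; simp only [PE]
    refine ⟨by omega, by omega, by omega, by omega⟩
  · intro q1 hq1 q2 hq2 he
    have hp := congrArg Nat.Partition.parts he
    simp only at hp
    obtain ⟨h1, h2, h3, h4⟩ := mem_TEs.mp hq1
    obtain ⟨h1', h2', h3', h4'⟩ := mem_TEs.mp hq2
    have hfilt := congrArg (fun s => Multiset.filter (fun t => 2 ≤ t) s) hp
    rw [filtE (n := n) h1 h3, filtE (n := n) h1' h3'] at hfilt
    obtain ⟨ex, ey⟩ := pair_inj h2 h2' hfilt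
    exact Prod.ext ex ey
  · intro p hp
    simp only [Finset.mem_filter, Finset.mem_univ, true_and] at hp; simp only [PE] at hp
    obtain ⟨h4, h3, h2, h1⟩ := hp
    obtain ⟨a, b, hab⟩ := Multiset.card_eq_two.mp h2
    obtain ⟨u, v, huv, hvu⟩ := sorted2 a b
    have hf2 : Multiset.filter (fun t => 2 ≤ t) p.parts = u ::ₘ {v} := by
      rw [hab]; exact huv
    -- u, v ≥ 3
    have hsub3 : Multiset.filter (fun t => 3 ≤ t) p.parts ≤
        Multiset.filter (fun t => 2 ≤ t) p.parts := by
      apply Multiset.monotone_filter_right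
      intro t ht; omega
    have hf3 : Multiset.filter (fun t => 3 ≤ t) p.parts = u ::ₘ {v} := by
      rw [hf2] at hsub3
      refine Multiset.eq_of_le_of_card_le hsub3 ?_
      simpa [Nge] using h3
    have hv3 : 3 ≤ v := by
      have : v ∈ Multiset.filter (fun t => 3 ≤ t) p.parts := by
        rw [hf3]; simp
      exact Multiset.of_mem_filter this
    have hu3 : 3 ≤ u := by
      have : u ∈ Multiset.filter (fun t => 3 ≤ t) p.parts := by
        rw [hf3]; simp
      exact Multiset.of_mem_filter this
    -- some element ≥ 4, hence u ≥ 4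
    have hu4 : 4 ≤ u := by
      obtain ⟨w, hw⟩ := Multiset.card_pos_iff_exists_mem.mp (by omega : 0 < Nge p.parts 4)
      have hw4 : 4 ≤ w := Multiset.of_mem_filter hw
      have hsub4 : Multiset.filter (fun t => 4 ≤ t) p.parts ≤
          Multiset.filter (fun t => 2 ≤ t) p.parts := by
        apply Multiset.monotone_filter_right
        intro t ht; omega
      have : w ∈ u ::ₘ {v} := by
        rw [← hf2]; exact Multiset.mem_of_le hsub4 hw
      simp [Multiset.mem_cons] at this
      rcases this with h | h <;> omega
    -- the rest is all ones
    set r := Multiset.filter (fun t => ¬ 2 ≤ t) p.parts with hrr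
    set c := Multiset.card r with hcc
    have hrd : r = replicate c 1 := by
      rw [Multiset.eq_replicate]
      refine ⟨rfl, fun t ht => ?_⟩
      have := Multiset.of_mem_filter ht
      have := p.parts_pos (Multiset.mem_of_le (Multiset.filter_le _ _) ht)
      omega
    have hparts : p.parts = u ::ₘ v ::ₘ replicate c 1 := by
      have h := (Multiset.filter_add_not (fun t => 2 ≤ t) p.parts).symm
      rw [hf2, ← hrr, hrd] at h
      simpa [Multiset.cons_add, Multiset.singleton_add] using h
    have hsum : u + v + c = n := by
      have := p.parts_sum
      rw [hparts] at this
      simp [Multiset.sum_replicate] at this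
      omega
    have e1 : Nge p.parts 1 = 2 + c := by
      rw [hparts, Nge_cons, Nge_cons, Nge_replicate]
      split_ifs <;> omega
    refine ⟨(u, v), mem_TEs.mpr ⟨by omega, by omega, by omega, by omega⟩, ?_⟩
    apply Nat.Partition.ext
    simp only
    rw [hparts, mkE]
    have ec : n - u - v = c := by omega
    rw [ec]

/-! ### Family D -/

def mkD (n y z : ℕ) : Multiset ℕ := (n-y-z) ::ₘ y ::ₘ {z}

lemma NgeD {y z : ℕ} (hz : 2 ≤ z) (hzy : z ≤ y) (hy : 3 ≤ y) (hA : 2*y+z ≤ n)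
    (hB : y+z+4 ≤ n) :
    1 ≤ Nge (mkD n y z) 4 ∧ 2 ≤ Nge (mkD n y z) 3 ∧ Nge (mkD n y z) 2 = 3 ∧
      Nge (mkD n y z) 1 = 3 := by
  refine ⟨?_, ?_, ?_, ?_⟩ <;>
    (rw [mkD, Nge_cons, Nge_cons, Nge_singleton]; split_ifs <;> omega)

lemma sumD {y z : ℕ} (hB : y+z+4 ≤ n) : (mkD n y z).sum = n := by
  simp [mkD]
  omega

lemma posD {y z : ℕ} (hz : 2 ≤ z) (hy : 3 ≤ y) (hB : y+z+4 ≤ n) : ∀ t ∈ mkD n y z, 0 < t := by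
  intro t ht
  simp [mkD] at ht
  omega

def PD (p : Nat.Partition n) : Prop :=
  1 ≤ Nge p.parts 4 ∧ 2 ≤ Nge p.parts 3 ∧ 3 ≤ Nge p.parts 2 ∧ Nge p.parts 1 = 3

instance : DecidablePred (PD (n := n)) := fun p => by unfold PD; infer_instance

lemma cardD (hn : 10 ≤ n) :
    (TDs n).card = (Finset.univ.filter fun p : Nat.Partition n => PD p).card := by
  apply Finset.card_bij (i := fun q hq =>
    ({ parts := mkD n q.1 q.2
       parts_pos := fun hx => posD (mem_TDs.mp hq).1 (mem_TDs.mp hq).2.2.1 (mem_TDs.mp hq).2.2.2.2 _ hx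
       parts_sum := sumD (mem_TDs.mp hq).2.2.2.2 } : Nat.Partition n))
  · intro q hq
    obtain ⟨h1, h2, h3, h4, h5⟩ := mem_TDs.mp hq
    obtain ⟨e4, e3, e2, e1⟩ := NgeD (n := n) h1 h2 h3 h4 h5
    simp only [Finset.mem_filter, Finset.mem_univ, true_and]; simp only [PD]
    refine ⟨by omega, by omega, by omega, by omega⟩
  · intro q1 hq1 q2 hq2 he
    have hp := congrArg Nat.Partition.parts he
    simp only [mkD] at hp
    obtain ⟨h1, h2, h3, h4, h5⟩ := mem_TDs.mp hq1
    obtain ⟨h1', h2', h3', h4', h5'⟩ := mem_TDs.mp hq2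
    have t1 : q1.2 ≤ q1.1 := h2
    have t2 : q1.1 ≤ n - q1.1 - q1.2 := by omega
    have t1' : q2.2 ≤ q2.1 := h2'
    have t2' : q2.1 ≤ n - q2.1 - q2.2 := by omega
    obtain ⟨ex, ey, ez⟩ := triple_inj t1 t2 t1' t2' hp
    exact Prod.ext ey ez
  · intro p hp
    simp only [Finset.mem_filter, Finset.mem_univ, true_and] at hp; simp only [PD] at hp
    obtain ⟨h4, h3, h2, h1⟩ := hp
    have hcard : Multiset.card p.parts = 3 := by
      rw [← Nge_one_eq]; exact h1
    obtain ⟨a, b, c, habc⟩ := Multiset.card_eq_three.mp hcard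
    obtain ⟨x, y, z, hxyz, hzy, hyx⟩ := sorted3 a b c
    have hparts : p.parts = {x, y, z} := by rw [habc, hxyz]
    -- all parts ≥ 2
    have hz2 : 2 ≤ z := by
      have hsub : Multiset.filter (fun t => 2 ≤ t) p.parts ≤ p.parts := Multiset.filter_le _ _
      have heq := Multiset.eq_of_le_of_card_le hsub (by
        rw [hcard]; exact h2)
      have : z ∈ Multiset.filter (fun t => 2 ≤ t) p.parts := by
        rw [heq, hparts]; simp
      exact Multiset.of_mem_filter this
    have hy3 : 3 ≤ y := by
      rw [hparts] at h3
      have : Nge ({x,y,z} : Multiset ℕ) 3 = Nge (x ::ₘ y ::ₘ {z}) 3 := rfl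
      rw [this, Nge_cons, Nge_cons, Nge_singleton] at h3
      split_ifs at h3 <;> omega
    have hx4 : 4 ≤ x := by
      rw [hparts] at h4
      have : Nge ({x,y,z} : Multiset ℕ) 4 = Nge (x ::ₘ y ::ₘ {z}) 4 := rfl
      rw [this, Nge_cons, Nge_cons, Nge_singleton] at h4
      split_ifs at h4 <;> omega
    have hsum : x + y + z = n := by
      have := p.parts_sum
      rw [hparts] at this
      simp at this
      omega
    refine ⟨(y, z), mem_TDs.mpr ⟨by omega, by omega, by omega, by omega, by omega⟩, ?_⟩
    apply Nat.Partition.ext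
    simp only
    rw [hparts, mkD]
    have ex : n - y - z = x := by omega
    rw [ex]
    rfl

end R3proof

namespace R3proof
open Multiset

lemma R_eq {n : ℕ} (hn : 10 ≤ n) : R 3 n = Scard n := by
  unfold R
  have hiff : ∀ p : Nat.Partition n, durfeeTriangleSize p.parts = 3 ↔
      (PC p ∨ (PF p ∨ (PE p ∨ PD p))) := by
    intro p
    rw [durfee_eq_three_iff, fits3_iff, fits4_iff]
    have c43 : Nge p.parts 4 ≤ Nge p.parts 3 := Nge_mono (by omega)
    have c32 : Nge p.parts 3 ≤ Nge p.parts 2 := Nge_mono (by omega)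
    have c21 : Nge p.parts 2 ≤ Nge p.parts 1 := Nge_mono (by omega)
    unfold PC PF PE PD
    omega
  rw [Finset.filter_congr (fun p _ => hiff p)]
  rw [Finset.filter_or, Finset.filter_or, Finset.filter_or]
  rw [Finset.card_union_of_disjoint, Finset.card_union_of_disjoint,
    Finset.card_union_of_disjoint]
  · rw [Scard]
    rw [← cardC hn, ← cardF hn, ← cardE hn, ← cardD hn]
    omega
  · refine Finset.disjoint_left.mpr ?_
    intro p hp hp'
    simp only [Finset.mem_filter, PE, PD] at hp hp'
    omega
  · refine Finset.disjoint_left.mpr ?_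
    intro p hp hp'
    simp only [Finset.mem_filter, Finset.mem_union, PF, PE, PD] at hp hp'
    omega
  · refine Finset.disjoint_left.mpr ?_
    intro p hp hp'
    simp only [Finset.mem_filter, Finset.mem_union, PC, PF, PE, PD] at hp hp'
    omega

end R3proof


/-- **Example (quasi-polynomial formula for `R_3`).** For all integers `n > 9`:
if `n = 3m` then `R_3(n) = 6m² - 15m + 7`; if `n = 3m + 1` then
`R_3(n) = 6m² - 11m + 2`; if `n = 3m + 2` then `R_3(n) = 6m² - 7m - 1`. -/
theorem R3_quasipolynomial (n m : ℕ) (hn : 9 < n) :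
    (n = 3 * m → (R 3 n : ℤ) = 6 * (m : ℤ) ^ 2 - 15 * (m : ℤ) + 7) ∧
    (n = 3 * m + 1 → (R 3 n : ℤ) = 6 * (m : ℤ) ^ 2 - 11 * (m : ℤ) + 2) ∧
    (n = 3 * m + 2 → (R 3 n : ℤ) = 6 * (m : ℤ) ^ 2 - 7 * (m : ℤ) - 1) := by
  have hn10 : 10 ≤ n := hn
  have hR : R 3 n = Scard n := R3proof.R_eq hn10
  have hf := Scard_formula n hn10
  rw [← hR] at hf
  refine ⟨?_, ?_, ?_⟩ <;> intro hm <;> subst hm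
  · rw [if_pos (by omega)] at hf
    have hz := congrArg (Nat.cast : ℕ → ℤ) hf
    push_cast at hz
    have hm4 : 4 ≤ m := by omega
    nlinarith [hz]
  · rw [if_neg (by omega)] at hf
    have hz := congrArg (Nat.cast : ℕ → ℤ) hf
    push_cast at hz
    nlinarith [hz]
  · rw [if_neg (by omega)] at hf
    have hz := congrArg (Nat.cast : ℕ → ℤ) hf
    push_cast at hz
    nlinarith [hz]
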